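/- Let e ∈ T be a nonzero vector with ⟨e,e⟩ = 0, and let K be the subgroup of T generated by e, ρ(e), ρ²(e), ρ³(e), ρ⁴(e). Then K contains a vector v with ⟨v,v⟩ > 0. -/
import Mathlib


open Matrix

/-- Gram matrix of `T = U ⊕ V ⊕ A₄ ⊕ A₄` (block diagonal, in the basis
`e, f, x, y, e₁, …, e₄, e₁', …, e₄'`). -/
def G : Matrix (Fin 12) (Fin 12) ℤ :=
  !![0, 1, 0, 0, 0, 0, 0, 0, 0, 0, 0, 0;
     1, 0, 0, 0, 0, 0, 0, 0, 0, 0, 0, 0;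
     0, 0, 2, 1, 0, 0, 0, 0, 0, 0, 0, 0;
     0, 0, 1, -2, 0, 0, 0, 0, 0, 0, 0, 0;
     0, 0, 0, 0, -2, 1, 0, 0, 0, 0, 0, 0;
     0, 0, 0, 0, 1, -2, 1, 0, 0, 0, 0, 0;
     0, 0, 0, 0, 0, 1, -2, 1, 0, 0, 0, 0;
     0, 0, 0, 0, 0, 0, 1, -2, 0, 0, 0, 0;
     0, 0, 0, 0, 0, 0, 0, 0, -2, 1, 0, 0;
     0, 0, 0, 0, 0, 0, 0, 0, 1, -2, 1, 0;
     0, 0, 0, 0, 0, 0, 0, 0, 0, 1, -2, 1;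
     0, 0, 0, 0, 0, 0, 0, 0, 0, 0, 1, -2]

/-- The matrix of `ρ = ρ₀ ⊕ ρ₄ ⊕ ρ₄` (block diagonal). -/
def ρ : Matrix (Fin 12) (Fin 12) ℤ :=
  !![0, -1, 0, 0, 0, 0, 0, 0, 0, 0, 0, 0;
     -1, -1, 1, 3, 0, 0, 0, 0, 0, 0, 0, 0;
     0, 0, -1, -1, 0, 0, 0, 0, 0, 0, 0, 0;
     0, -1, 0, 1, 0, 0, 0, 0, 0, 0, 0, 0;
     0, 0, 0, 0, 0, 0, 0, -1, 0, 0, 0, 0;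
     0, 0, 0, 0, 1, 0, 0, -1, 0, 0, 0, 0;
     0, 0, 0, 0, 0, 1, 0, -1, 0, 0, 0, 0;
     0, 0, 0, 0, 0, 0, 1, -1, 0, 0, 0, 0;
     0, 0, 0, 0, 0, 0, 0, 0, 0, 0, 0, -1;
     0, 0, 0, 0, 0, 0, 0, 0, 1, 0, 0, -1;
     0, 0, 0, 0, 0, 0, 0, 0, 0, 1, 0, -1;
     0, 0, 0, 0, 0, 0, 0, 0, 0, 0, 1, -1]

/-- The bilinear form of the lattice `T`: `⟨u, v⟩ = uᵀ G v`. -/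
def B (u v : Fin 12 → ℤ) : ℤ := u ⬝ᵥ G.mulVec v


lemma Gsymm : G.transpose = G := by decide
lemma isoZ : ρ.transpose * G * ρ = G := by decide
lemma phi5Z : ρ*ρ*ρ*ρ + ρ*ρ*ρ + ρ*ρ + ρ + 1 = 0 := by decide

lemma dp_iso {R : Type*} [CommRing R] (u v : Fin 12 → R) (Gm M : Matrix (Fin 12) (Fin 12) R) :
    (M.mulVec u) ⬝ᵥ Gm.mulVec (M.mulVec v) = u ⬝ᵥ (M.transpose * Gm * M).mulVec v := by
  calc (M.mulVec u) ⬝ᵥ Gm.mulVec (M.mulVec v)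
      = vecMul (M.mulVec u) Gm ⬝ᵥ (M.mulVec v) := dotProduct_mulVec _ _ _
    _ = vecMul (vecMul (M.mulVec u) Gm) M ⬝ᵥ v := dotProduct_mulVec _ _ _
    _ = vecMul (vecMul (vecMul u M.transpose) Gm) M ⬝ᵥ v := by rw [vecMul_transpose]
    _ = vecMul u (M.transpose * Gm * M) ⬝ᵥ v := by
        rw [vecMul_vecMul, vecMul_vecMul, Matrix.mul_assoc]
    _ = u ⬝ᵥ (M.transpose * Gm * M).mulVec v := (dotProduct_mulVec _ _ _).symm

lemma dp_symm {R : Type*} [CommRing R] (u v : Fin 12 → R) (Gm : Matrix (Fin 12) (Fin 12) R)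
    (h : Gm.transpose = Gm) : u ⬝ᵥ Gm.mulVec v = v ⬝ᵥ Gm.mulVec u := by
  rw [dotProduct_mulVec, ← mulVec_transpose, h, dotProduct_comm]

lemma B_rho (u v : Fin 12 → ℤ) : B (ρ.mulVec u) (ρ.mulVec v) = B u v := by
  unfold B; rw [dp_iso, isoZ]

lemma B_symm (u v : Fin 12 → ℤ) : B u v = B v u := dp_symm u v G Gsymm

lemma B_add_same (u v : Fin 12 → ℤ) : B (u + v) (u + v) = B u u + 2 * B u v + B v v := by
  have h := B_symm u v
  unfold B at *
  simp only [Matrix.mulVec_add, dotProduct_add, add_dotProduct]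
  linarith

lemma B_sub_same (u v : Fin 12 → ℤ) : B (u - v) (u - v) = B u u - 2 * B u v + B v v := by
  have h := B_symm u v
  unfold B at *
  simp only [Matrix.mulVec_sub, dotProduct_sub, sub_dotProduct]
  linarith

def Gq : Matrix (Fin 12) (Fin 12) ℚ := G.map Int.cast
def ρq : Matrix (Fin 12) (Fin 12) ℚ := ρ.map Int.cast
def Bq (u v : Fin 12 → ℚ) : ℚ := u ⬝ᵥ Gq.mulVec v
def cv (u : Fin 12 → ℤ) : Fin 12 → ℚ := fun i => (u i : ℚ)

lemma cv_mulVec (u : Fin 12 → ℤ) : ρq.mulVec (cv u) = cv (ρ.mulVec u) := by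
  funext i
  simp [ρq, cv, Matrix.mulVec, dotProduct, Matrix.map_apply]

lemma cv_B (u v : Fin 12 → ℤ) : Bq (cv u) (cv v) = ((B u v : ℤ) : ℚ) := by
  simp [Bq, B, Gq, cv, Matrix.mulVec, dotProduct, Matrix.map_apply, Finset.mul_sum]

lemma cv_eq_zero {u : Fin 12 → ℤ} (h : cv u = 0) : u = 0 := by
  funext i
  have h2 := congrFun h i
  simpa [cv] using h2

lemma Gq_symm : Gq.transpose = Gq := by
  ext i j
  have h := congrFun (congrFun Gsymm j) i
  simp only [Matrix.transpose_apply] at h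
  simp [Gq, Matrix.map_apply, Matrix.transpose_apply, h]

lemma Bq_symm (u v : Fin 12 → ℚ) : Bq u v = Bq v u := dp_symm u v Gq Gq_symm

lemma Bq_sub_left (x y z : Fin 12 → ℚ) : Bq (x - y) z = Bq x z - Bq y z := by
  simp [Bq, sub_dotProduct]

lemma Bq_smul_left (c : ℚ) (x z : Fin 12 → ℚ) : Bq (c • x) z = c * Bq x z := by
  simp [Bq, smul_dotProduct]

lemma Bq_sub_right (x y z : Fin 12 → ℚ) : Bq x (y - z) = Bq x y - Bq x z := by
  simp [Bq, Matrix.mulVec_sub, dotProduct_sub]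

lemma Bq_smul_right (c : ℚ) (x z : Fin 12 → ℚ) : Bq x (c • z) = c * Bq x z := by
  simp [Bq, Matrix.mulVec_smul, dotProduct_smul]

lemma phi5Q : ρq*ρq*ρq*ρq + ρq*ρq*ρq + ρq*ρq + ρq + 1 = 0 := by
  have h := congrArg (RingHom.mapMatrix (Int.castRingHom ℚ)) phi5Z
  simp only [_root_.map_add, _root_.map_mul, _root_.map_one, _root_.map_zero] at h
  simpa [RingHom.mapMatrix_apply, ρq] using h

lemma phi5_apply (v : Fin 12 → ℚ) :
    ρq.mulVec (ρq.mulVec (ρq.mulVec (ρq.mulVec v))) + ρq.mulVec (ρq.mulVec (ρq.mulVec v))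
      + ρq.mulVec (ρq.mulVec v) + ρq.mulVec v + v = 0 := by
  have h := congrArg (fun M => Matrix.mulVec M v) phi5Q
  simpa [Matrix.add_mulVec, Matrix.one_mulVec, Matrix.zero_mulVec,
    ← Matrix.mulVec_mulVec] using h

lemma eigen (t : ℚ) (v : Fin 12 → ℚ) (hv : ρq.mulVec v = t • v) : v = 0 := by
  have h2 : ρq.mulVec (ρq.mulVec v) = (t*t) • v := by
    rw [hv, Matrix.mulVec_smul, hv, smul_smul]
  have h3 : ρq.mulVec (ρq.mulVec (ρq.mulVec v)) = (t*(t*t)) • v := by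
    rw [h2, Matrix.mulVec_smul, hv, smul_smul, mul_comm]
  have h4 : ρq.mulVec (ρq.mulVec (ρq.mulVec (ρq.mulVec v))) = (t*(t*(t*t))) • v := by
    rw [h3, Matrix.mulVec_smul, hv, smul_smul, mul_comm]
  have hphi := phi5_apply v
  rw [h4, h3, h2, hv] at hphi
  have hsum : (t^4 + t^3 + t^2 + t + 1) • v = 0 := by
    rw [← hphi]; module
  have hpos : (0:ℚ) < t^4 + t^3 + t^2 + t + 1 := by
    nlinarith [sq_nonneg (2*t^2 + t), sq_nonneg (t + 2), sq_nonneg t]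
  rcases smul_eq_zero.mp hsum with h | h
  · exact absurd h (ne_of_gt hpos)
  · exact h

lemma norat (s t : ℚ) (hA : s^2 + s*t^2 + s*t + s + 1 = 0)
    (hB : t^3 + t^2 + 2*s*t + s + t + 1 = 0) : False := by
  have hres : 1 + 2*t - 5*t^3 - 5*t^4 - 3*t^5 - t^6 = 0 := by
    linear_combination (2*t+1)^2 * hA - ((2*t+1)*s - (t^3+t^2+t+1) + (t^2+t+1)*(2*t+1)) * hB
  have hq4 : (0:ℚ) < t^4 + 2*t^3 + 4*t^2 + 3*t + 1 := by
    nlinarith [sq_nonneg (t^2 + t), sq_nonneg (2*t + 1)]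
  have hg : t^2 + t - 1 = 0 := by
    have hfac : (t^2 + t - 1) * (-(t^4 + 2*t^3 + 4*t^2 + 3*t + 1)) = 0 := by
      linear_combination hres
    rcases mul_eq_zero.mp hfac with h | h
    · exact h
    · exact absurd (neg_eq_zero.mp h) (ne_of_gt hq4)
  have h5 : ((2*t+1 : ℚ))^2 = 5 := by linear_combination 4*hg
  have hirr : Irrational (Real.sqrt 5) := by
    have := (by norm_num : Nat.Prime 5).irrational_sqrt
    simpa using this
  have h5' : ((2*t+1:ℚ):ℝ)^2 = 5 := by exact_mod_cast h5
  have hs5 : Real.sqrt 5 = ((|2*t+1| : ℚ) : ℝ) := by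
    rw [← h5', Real.sqrt_sq_eq_abs]
    push_cast
    ring
  exact hirr ⟨|2*t+1|, hs5.symm⟩

lemma Bq_expand (w : Fin 12 → ℚ) : Bq w w =
    2*(w 0 * w 1) + 2*(w 2)^2 + 2*(w 2 * w 3) - 2*(w 3)^2
    - 2*(w 4)^2 + 2*(w 4 * w 5) - 2*(w 5)^2 + 2*(w 5 * w 6) - 2*(w 6)^2 + 2*(w 6 * w 7) - 2*(w 7)^2
    - 2*(w 8)^2 + 2*(w 8 * w 9) - 2*(w 9)^2 + 2*(w 9 * w 10) - 2*(w 10)^2 + 2*(w 10 * w 11) - 2*(w 11)^2 := by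
  simp [Bq, Gq, G, Matrix.mulVec, dotProduct, Fin.sum_univ_succ, Matrix.map_apply,
    show Fin.succ (0 : Fin 1) = (1 : Fin 2) from rfl,
    show Fin.succ (0 : Fin 2) = (1 : Fin 3) from rfl,
    show Fin.succ (1 : Fin 2) = (2 : Fin 3) from rfl,
    show Fin.succ (0 : Fin 3) = (1 : Fin 4) from rfl,
    show Fin.succ (1 : Fin 3) = (2 : Fin 4) from rfl,
    show Fin.succ (2 : Fin 3) = (3 : Fin 4) from rfl,
    show Fin.succ (0 : Fin 4) = (1 : Fin 5) from rfl,
    show Fin.succ (1 : Fin 4) = (2 : Fin 5) from rfl,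
    show Fin.succ (2 : Fin 4) = (3 : Fin 5) from rfl,
    show Fin.succ (3 : Fin 4) = (4 : Fin 5) from rfl,
    show Fin.succ (0 : Fin 5) = (1 : Fin 6) from rfl,
    show Fin.succ (1 : Fin 5) = (2 : Fin 6) from rfl,
    show Fin.succ (2 : Fin 5) = (3 : Fin 6) from rfl,
    show Fin.succ (3 : Fin 5) = (4 : Fin 6) from rfl,
    show Fin.succ (4 : Fin 5) = (5 : Fin 6) from rfl,
    show Fin.succ (0 : Fin 6) = (1 : Fin 7) from rfl,
    show Fin.succ (1 : Fin 6) = (2 : Fin 7) from rfl,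
    show Fin.succ (2 : Fin 6) = (3 : Fin 7) from rfl,
    show Fin.succ (3 : Fin 6) = (4 : Fin 7) from rfl,
    show Fin.succ (4 : Fin 6) = (5 : Fin 7) from rfl,
    show Fin.succ (5 : Fin 6) = (6 : Fin 7) from rfl,
    show Fin.succ (0 : Fin 7) = (1 : Fin 8) from rfl,
    show Fin.succ (1 : Fin 7) = (2 : Fin 8) from rfl,
    show Fin.succ (2 : Fin 7) = (3 : Fin 8) from rfl,
    show Fin.succ (3 : Fin 7) = (4 : Fin 8) from rfl,
    show Fin.succ (4 : Fin 7) = (5 : Fin 8) from rfl,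
    show Fin.succ (5 : Fin 7) = (6 : Fin 8) from rfl,
    show Fin.succ (6 : Fin 7) = (7 : Fin 8) from rfl,
    show Fin.succ (0 : Fin 8) = (1 : Fin 9) from rfl,
    show Fin.succ (1 : Fin 8) = (2 : Fin 9) from rfl,
    show Fin.succ (2 : Fin 8) = (3 : Fin 9) from rfl,
    show Fin.succ (3 : Fin 8) = (4 : Fin 9) from rfl,
    show Fin.succ (4 : Fin 8) = (5 : Fin 9) from rfl,
    show Fin.succ (5 : Fin 8) = (6 : Fin 9) from rfl,
    show Fin.succ (6 : Fin 8) = (7 : Fin 9) from rfl,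
    show Fin.succ (7 : Fin 8) = (8 : Fin 9) from rfl,
    show Fin.succ (0 : Fin 9) = (1 : Fin 10) from rfl,
    show Fin.succ (1 : Fin 9) = (2 : Fin 10) from rfl,
    show Fin.succ (2 : Fin 9) = (3 : Fin 10) from rfl,
    show Fin.succ (3 : Fin 9) = (4 : Fin 10) from rfl,
    show Fin.succ (4 : Fin 9) = (5 : Fin 10) from rfl,
    show Fin.succ (5 : Fin 9) = (6 : Fin 10) from rfl,
    show Fin.succ (6 : Fin 9) = (7 : Fin 10) from rfl,
    show Fin.succ (7 : Fin 9) = (8 : Fin 10) from rfl,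
    show Fin.succ (8 : Fin 9) = (9 : Fin 10) from rfl,
    show Fin.succ (0 : Fin 10) = (1 : Fin 11) from rfl,
    show Fin.succ (1 : Fin 10) = (2 : Fin 11) from rfl,
    show Fin.succ (2 : Fin 10) = (3 : Fin 11) from rfl,
    show Fin.succ (3 : Fin 10) = (4 : Fin 11) from rfl,
    show Fin.succ (4 : Fin 10) = (5 : Fin 11) from rfl,
    show Fin.succ (5 : Fin 10) = (6 : Fin 11) from rfl,
    show Fin.succ (6 : Fin 10) = (7 : Fin 11) from rfl,
    show Fin.succ (7 : Fin 10) = (8 : Fin 11) from rfl,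
    show Fin.succ (8 : Fin 10) = (9 : Fin 11) from rfl,
    show Fin.succ (9 : Fin 10) = (10 : Fin 11) from rfl,
    show Fin.succ (0 : Fin 11) = (1 : Fin 12) from rfl,
    show Fin.succ (1 : Fin 11) = (2 : Fin 12) from rfl,
    show Fin.succ (2 : Fin 11) = (3 : Fin 12) from rfl,
    show Fin.succ (3 : Fin 11) = (4 : Fin 12) from rfl,
    show Fin.succ (4 : Fin 11) = (5 : Fin 12) from rfl,
    show Fin.succ (5 : Fin 11) = (6 : Fin 12) from rfl,
    show Fin.succ (6 : Fin 11) = (7 : Fin 12) from rfl,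
    show Fin.succ (7 : Fin 11) = (8 : Fin 12) from rfl,
    show Fin.succ (8 : Fin 11) = (9 : Fin 12) from rfl,
    show Fin.succ (9 : Fin 11) = (10 : Fin 12) from rfl,
    show Fin.succ (10 : Fin 11) = (11 : Fin 12) from rfl]
  ring

lemma witt (w : Fin 12 → ℚ) (h0 : Bq w w = 0) (h1 : 2 * w 2 + w 3 = 0)
    (h2 : w 0 + w 1 = 0) : w = 0 := by
  have hP := Bq_expand w
  rw [h0] at hP
  have key : 30*(w 3)^2 + 6*(2*w 4 - w 5)^2 + 2*(3*w 5 - 2*w 6)^2 + (4*w 6 - 3*w 7)^2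
      + 15*(w 7)^2 + 6*(2*w 8 - w 9)^2 + 2*(3*w 9 - 2*w 10)^2 + (4*w 10 - 3*w 11)^2
      + 15*(w 11)^2 + 6*(w 1 - w 0)^2 = 0 := by
    linear_combination 6*(2*w 2 + w 3)*h1 + 6*(w 0 + w 1)*h2 + 12*hP
  have q1 : w 3 = 0 := by
    have hsq : (w 3)^2 = 0 := by linarith [sq_nonneg (w 3), sq_nonneg (2*w 4 - w 5), sq_nonneg (3*w 5 - 2*w 6), sq_nonneg (4*w 6 - 3*w 7), sq_nonneg (w 7), sq_nonneg (2*w 8 - w 9), sq_nonneg (3*w 9 - 2*w 10), sq_nonneg (4*w 10 - 3*w 11), sq_nonneg (w 11), sq_nonneg (w 1 - w 0)]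
    exact (pow_eq_zero_iff (n := 2) (by norm_num)).mp hsq
  have q2 : 2*w 4 - w 5 = 0 := by
    have hsq : (2*w 4 - w 5)^2 = 0 := by linarith [sq_nonneg (w 3), sq_nonneg (2*w 4 - w 5), sq_nonneg (3*w 5 - 2*w 6), sq_nonneg (4*w 6 - 3*w 7), sq_nonneg (w 7), sq_nonneg (2*w 8 - w 9), sq_nonneg (3*w 9 - 2*w 10), sq_nonneg (4*w 10 - 3*w 11), sq_nonneg (w 11), sq_nonneg (w 1 - w 0)]
    exact (pow_eq_zero_iff (n := 2) (by norm_num)).mp hsq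
  have q3 : 3*w 5 - 2*w 6 = 0 := by
    have hsq : (3*w 5 - 2*w 6)^2 = 0 := by linarith [sq_nonneg (w 3), sq_nonneg (2*w 4 - w 5), sq_nonneg (3*w 5 - 2*w 6), sq_nonneg (4*w 6 - 3*w 7), sq_nonneg (w 7), sq_nonneg (2*w 8 - w 9), sq_nonneg (3*w 9 - 2*w 10), sq_nonneg (4*w 10 - 3*w 11), sq_nonneg (w 11), sq_nonneg (w 1 - w 0)]
    exact (pow_eq_zero_iff (n := 2) (by norm_num)).mp hsq
  have q4 : 4*w 6 - 3*w 7 = 0 := by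
    have hsq : (4*w 6 - 3*w 7)^2 = 0 := by linarith [sq_nonneg (w 3), sq_nonneg (2*w 4 - w 5), sq_nonneg (3*w 5 - 2*w 6), sq_nonneg (4*w 6 - 3*w 7), sq_nonneg (w 7), sq_nonneg (2*w 8 - w 9), sq_nonneg (3*w 9 - 2*w 10), sq_nonneg (4*w 10 - 3*w 11), sq_nonneg (w 11), sq_nonneg (w 1 - w 0)]
    exact (pow_eq_zero_iff (n := 2) (by norm_num)).mp hsq
  have q5 : w 7 = 0 := by
    have hsq : (w 7)^2 = 0 := by linarith [sq_nonneg (w 3), sq_nonneg (2*w 4 - w 5), sq_nonneg (3*w 5 - 2*w 6), sq_nonneg (4*w 6 - 3*w 7), sq_nonneg (w 7), sq_nonneg (2*w 8 - w 9), sq_nonneg (3*w 9 - 2*w 10), sq_nonneg (4*w 10 - 3*w 11), sq_nonneg (w 11), sq_nonneg (w 1 - w 0)]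
    exact (pow_eq_zero_iff (n := 2) (by norm_num)).mp hsq
  have q6 : 2*w 8 - w 9 = 0 := by
    have hsq : (2*w 8 - w 9)^2 = 0 := by linarith [sq_nonneg (w 3), sq_nonneg (2*w 4 - w 5), sq_nonneg (3*w 5 - 2*w 6), sq_nonneg (4*w 6 - 3*w 7), sq_nonneg (w 7), sq_nonneg (2*w 8 - w 9), sq_nonneg (3*w 9 - 2*w 10), sq_nonneg (4*w 10 - 3*w 11), sq_nonneg (w 11), sq_nonneg (w 1 - w 0)]
    exact (pow_eq_zero_iff (n := 2) (by norm_num)).mp hsq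
  have q7 : 3*w 9 - 2*w 10 = 0 := by
    have hsq : (3*w 9 - 2*w 10)^2 = 0 := by linarith [sq_nonneg (w 3), sq_nonneg (2*w 4 - w 5), sq_nonneg (3*w 5 - 2*w 6), sq_nonneg (4*w 6 - 3*w 7), sq_nonneg (w 7), sq_nonneg (2*w 8 - w 9), sq_nonneg (3*w 9 - 2*w 10), sq_nonneg (4*w 10 - 3*w 11), sq_nonneg (w 11), sq_nonneg (w 1 - w 0)]
    exact (pow_eq_zero_iff (n := 2) (by norm_num)).mp hsq
  have q8 : 4*w 10 - 3*w 11 = 0 := by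
    have hsq : (4*w 10 - 3*w 11)^2 = 0 := by linarith [sq_nonneg (w 3), sq_nonneg (2*w 4 - w 5), sq_nonneg (3*w 5 - 2*w 6), sq_nonneg (4*w 6 - 3*w 7), sq_nonneg (w 7), sq_nonneg (2*w 8 - w 9), sq_nonneg (3*w 9 - 2*w 10), sq_nonneg (4*w 10 - 3*w 11), sq_nonneg (w 11), sq_nonneg (w 1 - w 0)]
    exact (pow_eq_zero_iff (n := 2) (by norm_num)).mp hsq
  have q9 : w 11 = 0 := by
    have hsq : (w 11)^2 = 0 := by linarith [sq_nonneg (w 3), sq_nonneg (2*w 4 - w 5), sq_nonneg (3*w 5 - 2*w 6), sq_nonneg (4*w 6 - 3*w 7), sq_nonneg (w 7), sq_nonneg (2*w 8 - w 9), sq_nonneg (3*w 9 - 2*w 10), sq_nonneg (4*w 10 - 3*w 11), sq_nonneg (w 11), sq_nonneg (w 1 - w 0)]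
    exact (pow_eq_zero_iff (n := 2) (by norm_num)).mp hsq
  have q10 : w 1 - w 0 = 0 := by
    have hsq : (w 1 - w 0)^2 = 0 := by linarith [sq_nonneg (w 3), sq_nonneg (2*w 4 - w 5), sq_nonneg (3*w 5 - 2*w 6), sq_nonneg (4*w 6 - 3*w 7), sq_nonneg (w 7), sq_nonneg (2*w 8 - w 9), sq_nonneg (3*w 9 - 2*w 10), sq_nonneg (4*w 10 - 3*w 11), sq_nonneg (w 11), sq_nonneg (w 1 - w 0)]
    exact (pow_eq_zero_iff (n := 2) (by norm_num)).mp hsq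
  funext i
  fin_cases i <;> simp <;> linarith

theorem stmt4 (e : Fin 12 → ℤ) (he : e ≠ 0) (hisot : B e e = 0) :
    ∃ v ∈ Submodule.span ℤ {w : Fin 12 → ℤ | ∃ i < 5, w = (ρ ^ i).mulVec e},
      0 < B v v := by
  classical
  have mem0 : e ∈ Submodule.span ℤ {w : Fin 12 → ℤ | ∃ i < 5, w = (ρ ^ i).mulVec e} :=
    Submodule.subset_span ⟨0, by norm_num, by rw [pow_zero, Matrix.one_mulVec]⟩
  have mem1 : ρ.mulVec e ∈ Submodule.span ℤ {w : Fin 12 → ℤ | ∃ i < 5, w = (ρ ^ i).mulVec e} :=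
    Submodule.subset_span ⟨1, by norm_num, by rw [pow_one]⟩
  have mem2 : ρ.mulVec (ρ.mulVec e) ∈
      Submodule.span ℤ {w : Fin 12 → ℤ | ∃ i < 5, w = (ρ ^ i).mulVec e} :=
    Submodule.subset_span ⟨2, by norm_num, by rw [pow_two, ← Matrix.mulVec_mulVec]⟩
  set e1 := ρ.mulVec e with he1
  set e2 := ρ.mulVec e1 with he2
  have h11 : B e1 e1 = 0 := by rw [he1, B_rho]; exact hisot
  have h22 : B e2 e2 = 0 := by rw [he2, he1, B_rho, B_rho]; exact hisot
  have h12 : B e1 e2 = B e e1 := by rw [he2, he1, B_rho]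
  rcases lt_trichotomy (B e e1) 0 with h | h | h
  · refine ⟨e - e1, Submodule.sub_mem _ mem0 mem1, ?_⟩
    rw [B_sub_same, hisot, h11]; linarith
  · rcases lt_trichotomy (B e e2) 0 with h' | h' | h'
    · refine ⟨e - e2, Submodule.sub_mem _ mem0 mem2, ?_⟩
      rw [B_sub_same, hisot, h22]; linarith
    · -- contradiction case : all inner products vanish
      exfalso
      set u0 := cv e with hu0v
      set u1 := cv e1 with hu1v
      set u2 := cv e2 with hu2v
      have hu1 : ρq.mulVec u0 = u1 := by rw [hu0v, hu1v, cv_mulVec, he1]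
      have hu2 : ρq.mulVec u1 = u2 := by rw [hu1v, hu2v, cv_mulVec, he2]
      have g00 : Bq u0 u0 = 0 := by rw [hu0v, cv_B, hisot]; norm_num
      have g01 : Bq u0 u1 = 0 := by rw [hu0v, hu1v, cv_B, h]; norm_num
      have g02 : Bq u0 u2 = 0 := by rw [hu0v, hu2v, cv_B, h']; norm_num
      have g11 : Bq u1 u1 = 0 := by rw [hu1v, cv_B, h11]; norm_num
      have g12 : Bq u1 u2 = 0 := by rw [hu1v, hu2v, cv_B, h12, h]; norm_num
      have g22 : Bq u2 u2 = 0 := by rw [hu2v, cv_B, h22]; norm_num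
      have g10 : Bq u1 u0 = 0 := by rw [Bq_symm]; exact g01
      have g20 : Bq u2 u0 = 0 := by rw [Bq_symm]; exact g02
      have g21 : Bq u2 u1 = 0 := by rw [Bq_symm]; exact g12
      have hne : u0 ≠ 0 := fun hz => he (cv_eq_zero (hu0v ▸ hz))
      by_cases hdet : (2*u0 2 + u0 3) * (u1 0 + u1 1) - (u0 0 + u0 1) * (2*u1 2 + u1 3) = 0
      · by_cases ha : 2*u0 2 + u0 3 = 0
        · by_cases hb : u0 0 + u0 1 = 0
          · exact hne (witt u0 g00 ha hb)
          · have hc : 2*u1 2 + u1 3 = 0 := by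
              have hz : (u0 0 + u0 1) * (2*u1 2 + u1 3) = 0 := by
                linear_combination -hdet + (u1 0 + u1 1)*ha
              exact (mul_eq_zero.mp hz).resolve_left hb
            have hw : u1 - ((u1 0 + u1 1) / (u0 0 + u0 1)) • u0 = 0 := by
              apply witt
              · simp only [Bq_sub_left, Bq_sub_right, Bq_smul_left, Bq_smul_right,
                  g00, g01, g10, g11]
                ring
              · simp only [Pi.sub_apply, Pi.smul_apply, smul_eq_mul]
                linear_combination hc - ((u1 0 + u1 1) / (u0 0 + u0 1)) * ha
              · simp only [Pi.sub_apply, Pi.smul_apply, smul_eq_mul]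
                field_simp
                ring
            have heq : u1 = ((u1 0 + u1 1) / (u0 0 + u0 1)) • u0 := by
              rwa [sub_eq_zero] at hw
            exact hne (eigen _ u0 (hu1.trans heq))
        · have hw : u1 - ((2*u1 2 + u1 3) / (2*u0 2 + u0 3)) • u0 = 0 := by
            apply witt
            · simp only [Bq_sub_left, Bq_sub_right, Bq_smul_left, Bq_smul_right,
                g00, g01, g10, g11]
              ring
            · simp only [Pi.sub_apply, Pi.smul_apply, smul_eq_mul]
              field_simp
              ring
            · simp only [Pi.sub_apply, Pi.smul_apply, smul_eq_mul]
              have hl : (2*u1 2 + u1 3)/(2*u0 2 + u0 3) * (u0 0 + u0 1) = u1 0 + u1 1 := by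
                rw [div_mul_eq_mul_div, div_eq_iff ha]
                linear_combination -hdet
              linear_combination -hl
          have heq : u1 = ((2*u1 2 + u1 3) / (2*u0 2 + u0 3)) • u0 := by
            rwa [sub_eq_zero] at hw
          exact hne (eigen _ u0 (hu1.trans heq))
      · set Δ := (2*u0 2 + u0 3) * (u1 0 + u1 1) - (u0 0 + u0 1) * (2*u1 2 + u1 3) with hΔ
        set s := ((2*u2 2 + u2 3) * (u1 0 + u1 1) - (u2 0 + u2 1) * (2*u1 2 + u1 3)) / Δ with hs
        set t := ((2*u0 2 + u0 3) * (u2 0 + u2 1) - (u0 0 + u0 1) * (2*u2 2 + u2 3)) / Δ with ht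
        have hw : u2 - s • u0 - t • u1 = 0 := by
          apply witt
          · simp only [Bq_sub_left, Bq_sub_right, Bq_smul_left, Bq_smul_right,
              g00, g01, g02, g10, g11, g12, g20, g21, g22]
            ring
          · simp only [Pi.sub_apply, Pi.smul_apply, smul_eq_mul]
            rw [hs, ht]
            field_simp
            ring
          · simp only [Pi.sub_apply, Pi.smul_apply, smul_eq_mul]
            rw [hs, ht]
            field_simp
            ring
        have hu2' : u2 = s • u0 + t • u1 := by
          rw [sub_sub, sub_eq_zero] at hw
          exact hw
        have h3 : ρq.mulVec u2 = (t*s) • u0 + (s + t^2) • u1 := by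
          rw [hu2', Matrix.mulVec_add, Matrix.mulVec_smul, Matrix.mulVec_smul, hu1, hu2, hu2']
          module
        have h4 : ρq.mulVec (ρq.mulVec u2) = (s^2 + t^2*s) • u0 + (2*s*t + t^3) • u1 := by
          rw [h3, Matrix.mulVec_add, Matrix.mulVec_smul, Matrix.mulVec_smul, hu1, hu2, hu2']
          module
        have hphi := phi5_apply u0
        rw [hu1, hu2, h4, h3, hu2'] at hphi
        have key : (s^2 + s*t^2 + s*t + s + 1) • u0
            + (t^3 + t^2 + 2*s*t + s + t + 1) • u1 = 0 := by
          rw [← hphi]; module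
        by_cases hBc : t^3 + t^2 + 2*s*t + s + t + 1 = 0
        · by_cases hAc : s^2 + s*t^2 + s*t + s + 1 = 0
          · exact norat s t hAc hBc
          · apply hne
            rw [hBc, zero_smul, add_zero] at key
            exact (smul_eq_zero.mp key).resolve_left hAc
        · apply hne
          have h5 : (t^3 + t^2 + 2*s*t + s + t + 1) • u1
              = (-(s^2 + s*t^2 + s*t + s + 1)) • u0 := by
            rw [neg_smul]
            exact eq_neg_of_add_eq_zero_right key
          have h6 : u1 = ((t^3 + t^2 + 2*s*t + s + t + 1)⁻¹
              * (-(s^2 + s*t^2 + s*t + s + 1))) • u0 := by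
            rw [← smul_smul, ← h5, smul_smul, inv_mul_cancel₀ hBc, one_smul]
          exact eigen _ u0 (hu1.trans h6)
    · refine ⟨e + e2, Submodule.add_mem _ mem0 mem2, ?_⟩
      rw [B_add_same, hisot, h22]; linarith
  · refine ⟨e + e1, Submodule.add_mem _ mem0 mem1, ?_⟩
    rw [B_add_same, hisot, h11]; linarith
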